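/- Let X be a normed vector space, A ⊆ X a convex set, a ∈ X and β ∈ A a nearest point of A to a, i.e., ‖a − y‖ ≥ ‖a − β‖ for all y ∈ A. Suppose a ≠ β, let δ > 0, set λ = ‖a − β‖/(δ + ‖a − β‖), and let h = (1/λ)a + β − (1/λ)β (so that a = λh + (1−λ)β). Then ‖h − y‖ ≥ ‖h − β‖ for all y ∈ A; moreover ‖h − a‖ = δ and ‖h − β‖ = δ + ‖a − β‖. -/

import Mathlib

/-- The computation inside the proof of Lemma 3.1: if `β` is a nearest point of the convex
set `A` to `a`, `a ≠ β`, `δ > 0`, `λ = ‖a − β‖/(δ + ‖a − β‖)` and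
`h = (1/λ)a + β − (1/λ)β`, then `β` is also a nearest point of `A` to `h`,
`‖h − a‖ = δ` and `‖h − β‖ = δ + ‖a − β‖`. -/
theorem stmt_2 {X : Type*} [NormedAddCommGroup X] [NormedSpace ℝ X]
    (A : Set X) (hAconv : Convex ℝ A)
    (a β : X) (hβ : β ∈ A)
    (hnear : ∀ y ∈ A, ‖a - β‖ ≤ ‖a - y‖)
    (hne : a ≠ β) (δ : ℝ) (hδ : 0 < δ)
    (lam : ℝ) (hlam : lam = ‖a - β‖ / (δ + ‖a - β‖))
    (h : X) (hh : h = (1 / lam) • a + β - (1 / lam) • β) :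
    (∀ y ∈ A, ‖h - β‖ ≤ ‖h - y‖) ∧ ‖h - a‖ = δ ∧ ‖h - β‖ = δ + ‖a - β‖ := by
  set r : ℝ := ‖a - β‖ with hr
  have hrpos : 0 < r := norm_pos_iff.mpr (sub_ne_zero.mpr hne)
  have hdr : 0 < δ + r := by linarith
  have hlampos : 0 < lam := by rw [hlam]; positivity
  have hlamlt : lam < 1 := by
    rw [hlam, div_lt_one hdr]; linarith
  have hinv : 1 / lam = (δ + r) / r := by
    rw [hlam, one_div_div]
  -- key vector identities
  have hhb : h - β = (1 / lam) • (a - β) := by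
    rw [hh, smul_sub]; abel
  have hha : h - a = (1 / lam - 1) • (a - β) := by
    rw [hh, sub_smul, smul_sub, one_smul]; abel
  have hnhb : ‖h - β‖ = δ + r := by
    rw [hhb, norm_smul, hinv, Real.norm_eq_abs, abs_of_pos (by positivity)]
    field_simp
    exact hr.symm
  have hnha : ‖h - a‖ = δ := by
    rw [hha, norm_smul, hinv, Real.norm_eq_abs]
    have : (δ + r) / r - 1 = δ / r := by field_simp; ring
    rw [this, abs_of_pos (by positivity)]
    field_simp
    exact hr.symm
  refine ⟨?_, hnha, hnhb⟩
  intro y hy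
  have hz : lam • y + (1 - lam) • β ∈ A :=
    hAconv hy hβ (le_of_lt hlampos) (by linarith) (by ring)
  have haz : a - (lam • y + (1 - lam) • β) = lam • (h - y) := by
    rw [hh]
    match_scalars <;> field_simp <;> ring
  have := hnear _ hz
  rw [haz, norm_smul, Real.norm_eq_abs, abs_of_pos hlampos] at this
  have hlhb : r = lam * ‖h - β‖ := by
    rw [hnhb, hlam]; field_simp
  rw [hlhb] at this
  exact le_of_mul_le_mul_left this hlampos
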